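/- Let A be an n×n matrix (n ≥ 1) over the min-plus semiring Tropical(WithTop ℝ), and suppose every cycle of A has nonnegative weight: for every k ≥ 1 and every index i, 0 ≤ untrop((A^k) i i) in WithTop ℝ. Then the power series of A truncates at n−1 terms: for every m ≥ n−1, ∑_{k=0}^{m} A^k = ∑_{k=0}^{n−1} A^k (sums of matrix powers taken in the tropical semiring, i.e. entrywise minimum). -/

import Mathlib

open Tropical

section Aux

variable {n : ℕ} (A : Matrix (Fin n) (Fin n) (Tropical (WithTop ℝ)))

/-- weight of the walk through the given list of vertices -/
def vw : List (Fin n) → Tropical (WithTop ℝ)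
  | [] => 1
  | [_] => 1
  | a :: b :: l => A a b * vw (b :: l)

lemma vw_nil : vw A [] = 1 := rfl
lemma vw_single (a : Fin n) : vw A [a] = 1 := rfl
lemma vw_cons_cons (a b : Fin n) (l : List (Fin n)) :
    vw A (a :: b :: l) = A a b * vw A (b :: l) := rfl

lemma vw_append (X : List (Fin n)) (v : Fin n) (Z : List (Fin n)) :
    vw A (X ++ v :: Z) = vw A (X ++ [v]) * vw A (v :: Z) := by
  induction X with
  | nil => simp [vw_single, vw_nil]
  | cons a X ih =>
    cases X with
    | nil =>
      simp only [List.nil_append, List.cons_append, vw_cons_cons, vw_single, mul_one]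
    | cons b X' =>
      have : (a :: b :: X') ++ v :: Z = a :: ((b :: X') ++ v :: Z) := rfl
      rw [this]
      have h2 : ((b :: X') ++ v :: Z) = b :: (X' ++ v :: Z) := rfl
      rw [h2, vw_cons_cons]
      have := ih
      rw [List.cons_append] at this
      rw [this, ← mul_assoc]
      rfl

lemma pow_apply_eq (k : ℕ) (i j : Fin n) :
    (A ^ (k + 1)) i j = ∑ f : Fin k → Fin n, vw A (i :: List.ofFn f ++ [j]) := by
  induction k generalizing i with
  | zero =>
    simp [pow_one, vw_cons_cons, vw_single]
  | succ k ih =>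
    rw [pow_succ', Matrix.mul_apply]
    simp_rw [ih]
    rw [← Equiv.sum_comp (Fin.consEquiv (fun _ : Fin (k+1) => Fin n))
      (fun g => vw A (i :: List.ofFn g ++ [j])), Fintype.sum_prod_type]
    refine Finset.sum_congr rfl fun x _ => ?_
    rw [Finset.mul_sum]
    refine Finset.sum_congr rfl fun f _ => ?_
    have hofn : List.ofFn (Fin.cons x f : Fin (k+1) → Fin n) = x :: List.ofFn f := by
      simp [List.ofFn_succ]
    show _ = vw A (i :: List.ofFn (Fin.cons x f) ++ [j])
    rw [hofn]
    exact (vw_cons_cons A i x (List.ofFn f ++ [j])).symm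

lemma term_le (L : List (Fin n)) (i j : Fin n) :
    untrop ((A ^ (L.length + 1)) i j) ≤ untrop (vw A (i :: L ++ [j])) := by
  rw [pow_apply_eq, Finset.untrop_sum']
  have h := Finset.inf_le (f := untrop ∘ fun f : Fin L.length → Fin n => vw A (i :: List.ofFn f ++ [j]))
    (Finset.mem_univ L.get)
  simpa using h

lemma cycle_nonneg (hcyc : ∀ k : ℕ, 1 ≤ k → ∀ i : Fin n,
      (0 : WithTop ℝ) ≤ Tropical.untrop ((A ^ k) i i))
    (v : Fin n) (M : List (Fin n)) :
    (0 : WithTop ℝ) ≤ untrop (vw A (v :: M ++ [v])) :=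
  le_trans (hcyc (M.length + 1) (Nat.le_add_left _ _) v) (term_le A M v v)

lemma exists_dup_split {α : Type*} : ∀ (V : List α), ¬ V.Nodup →
    ∃ (v : α) (P M S : List α), V = P ++ v :: (M ++ v :: S) := by
  intro V
  induction V with
  | nil => simp
  | cons a V ih =>
    intro h
    rw [List.nodup_cons] at h
    by_cases ha : a ∈ V
    · obtain ⟨M, S, rfl⟩ := List.append_of_mem ha
      exact ⟨a, [], M, S, rfl⟩
    · have : ¬ V.Nodup := fun hv => h ⟨ha, hv⟩
      obtain ⟨v, P, M, S, rfl⟩ := ih this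
      exact ⟨v, a :: P, M, S, rfl⟩

lemma key (hcyc : ∀ k : ℕ, 1 ≤ k → ∀ i : Fin n,
      (0 : WithTop ℝ) ≤ Tropical.untrop ((A ^ k) i i)) :
    ∀ (N : ℕ) (V : List (Fin n)), V.length ≤ N → ∀ i j : Fin n,
      V.head? = some i → V.getLast? = some j →
      untrop ((∑ l ∈ Finset.range n, A ^ l) i j) ≤ untrop (vw A V) := by
  intro N
  induction N with
  | zero =>
    intro V hV i j hh _
    have : V = [] := List.length_eq_zero_iff.mp (Nat.le_zero.mp hV)
    subst this
    simp at hh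
  | succ N ih =>
    intro V hV i j hh hl
    have hB : untrop ((∑ l ∈ Finset.range n, A ^ l) i j)
        = (Finset.range n).inf (fun l => untrop ((A ^ l) i j)) := by
      rw [Matrix.sum_apply, Finset.untrop_sum']
      rfl
    by_cases hlen : V.length ≤ n
    · -- short walk: it is a term of the truncated sum
      match V, hV, hl, hh, hlen with
      | [x], hV, hl, hh, hlen =>
        simp only [List.head?_cons, Option.some.injEq] at hh
        simp only [List.getLast?_singleton, Option.some.injEq] at hl
        subst hh
        subst hl
        rw [hB, vw_single, untrop_one]
        refine le_trans (Finset.inf_le (Finset.mem_range.2 (Nat.zero_lt_of_lt x.isLt))) ?_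
        simp [Matrix.one_apply_eq]
      | a :: b :: V', hV, hl, hh, hlen =>
        simp only [List.head?_cons, Option.some.injEq] at hh
        subst hh
        obtain hc | ⟨L, e, hLe⟩ := (b :: V').eq_nil_or_concat
        · exact absurd hc (by simp)
        rw [List.concat_eq_append] at hLe
        have hj : e = j := by
          rw [List.getLast?_cons_cons, hLe,
            List.getLast?_append_cons, List.getLast?_singleton] at hl
          exact (Option.some.injEq _ _ ▸ hl)
        subst hj
        have h1 : V'.length + 1 = L.length + 1 := by
          simpa using congrArg List.length hLe
        have hlen2 : L.length + 1 < n := by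
          simp only [List.length_cons] at hlen
          omega
        rw [hB, hLe]
        refine le_trans (Finset.inf_le (Finset.mem_range.2 hlen2)) ?_
        exact term_le A L a e
    · -- long walk: pigeonhole, remove a nonnegative cycle
      have hnodup : ¬ V.Nodup := by
        intro hnd
        have := hnd.length_le_card
        simp [Fintype.card_fin] at this
        omega
      obtain ⟨v, P, M, S, rfl⟩ := exists_dup_split _ hnodup
      set W := P ++ v :: S with hW
      have hWh : W.head? = some i := by
        rw [hW]
        cases P with
        | nil => simpa using hh
        | cons p P' => simpa using hh
      have hWl : W.getLast? = some j := by
        rw [hW, List.getLast?_append_cons]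
        rw [List.getLast?_append_cons, ← List.cons_append,
          List.getLast?_append_cons] at hl
        exact hl
      have hWlen : W.length ≤ N := by
        have h1 : (P ++ v :: (M ++ v :: S)).length
            = P.length + M.length + S.length + 2 := by
          simp only [List.length_append, List.length_cons]
          omega
        have h2 : W.length = P.length + S.length + 1 := by
          simp only [hW, List.length_append, List.length_cons]
          omega
        rw [h1] at hV
        omega
      refine le_trans (ih W hWlen i j hWh hWl) ?_
      -- vw W ≤ vw V since the removed cycle is nonnegative
      have e1 : vw A (P ++ v :: (M ++ v :: S))
          = vw A (P ++ [v]) * (vw A (v :: M ++ [v]) * vw A (v :: S)) := by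
        rw [vw_append A P v (M ++ v :: S)]
        congr 1
        rw [← List.cons_append, vw_append A (v :: M) v S]
      have e2 : vw A W = vw A (P ++ [v]) * vw A (v :: S) := vw_append A P v S
      rw [e1, e2, untrop_mul, untrop_mul, untrop_mul]
      have h0 := cycle_nonneg A hcyc v M
      calc untrop (vw A (P ++ [v])) + untrop (vw A (v :: S))
          = untrop (vw A (P ++ [v])) + (0 + untrop (vw A (v :: S))) := by rw [zero_add]
        _ ≤ untrop (vw A (P ++ [v]))
            + (untrop (vw A (v :: M ++ [v])) + untrop (vw A (v :: S))) :=
            add_le_add_right (add_le_add_left h0 _) _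

end Aux

/-- Over the min-plus semiring `Tropical (WithTop ℝ)`, if every cycle of an
`n × n` matrix `A` (with `n ≥ 1`) has nonnegative weight, then the power
series of `A` truncates: `∑_{k=0}^{m} A^k = ∑_{k=0}^{n-1} A^k` for every
`m ≥ n - 1`. -/
theorem tropical_power_series_truncates (n : ℕ) (hn : 1 ≤ n)
    (A : Matrix (Fin n) (Fin n) (Tropical (WithTop ℝ)))
    (hcyc : ∀ k : ℕ, 1 ≤ k → ∀ i : Fin n,
      (0 : WithTop ℝ) ≤ Tropical.untrop ((A ^ k) i i)) :
    ∀ m : ℕ, n - 1 ≤ m →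
      ∑ k ∈ Finset.range (m + 1), A ^ k = ∑ k ∈ Finset.range n, A ^ k := by
  intro m hm
  have hnm : n ≤ m + 1 := by omega
  have hBk : ∀ (k : ℕ) (i j : Fin n),
      untrop ((∑ l ∈ Finset.range n, A ^ l) i j) ≤ untrop ((A ^ k) i j) := by
    intro k i j
    match k with
    | 0 =>
      rw [Matrix.sum_apply, Finset.untrop_sum']
      exact Finset.inf_le (Finset.mem_range.2 hn)
    | k + 1 =>
      rw [pow_apply_eq, Finset.untrop_sum']
      refine Finset.le_inf fun f _ => ?_
      refine key A hcyc (k + 2) (i :: List.ofFn f ++ [j]) (by simp) i j (by simp) ?_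
      show ((i :: List.ofFn f) ++ [j]).getLast? = some j
      rw [List.getLast?_append_cons]
      rfl
  ext i j
  apply Tropical.untrop_injective
  rw [Matrix.sum_apply, Matrix.sum_apply, Finset.untrop_sum', Finset.untrop_sum']
  apply le_antisymm
  · exact Finset.inf_mono (Finset.range_subset_range.2 hnm)
  · refine Finset.le_inf fun k _ => ?_
    have := hBk k i j
    rwa [Matrix.sum_apply, Finset.untrop_sum'] at this
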